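/- Let $\{x_j\}_{j=0}^d \subset [-\ell,\ell]$ be a $\delta$-separated set of $d+1$ points. Then for any polynomial $p$ of degree at most $d$: $\sup_{x \in [-\ell,\ell]} |p(x)| \leq (2 e^2 (\delta d)^{-1} \ell)^d \max_{0 \leq j \leq d} |p(x_j)|$. -/

import Mathlib

open Real Polynomial

/-- Product lower bound for separated points on one side of `a`, plus a bound for the maximum. -/
private lemma sep_prod_aux {ι : Type*} [DecidableEq ι] (f : ι → ℝ) (δ a : ℝ) (hδ : 0 < δ) :
    ∀ (n : ℕ) (S : Finset ι), S.card = n →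
      (∀ j ∈ S, δ ≤ f j - a) →
      (∀ i ∈ S, ∀ j ∈ S, i ≠ j → δ ≤ |f i - f j|) →
      (δ ^ n * n.factorial ≤ ∏ j ∈ S, (f j - a)) ∧
        ∀ j ∈ S, (∀ k ∈ S, f k ≤ f j) → δ * n ≤ f j - a := by
  intro n
  induction n with
  | zero =>
    intro S hS _ _
    rw [Finset.card_eq_zero] at hS
    subst hS
    simp
  | succ n ih =>
    intro S hS ha hsep
    have part2 : ∀ j ∈ S, (∀ k ∈ S, f k ≤ f j) → δ * ((n : ℕ) + 1 : ℕ) ≤ f j - a := by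
      intro j hj hmax
      rcases Nat.eq_zero_or_pos n with h0 | hn
      · subst h0
        have := ha j hj
        push_cast
        linarith
      · have hS' : (S.erase j).card = n := by
          simp [Finset.card_erase_of_mem hj, hS]
        have hne' : (S.erase j).Nonempty := Finset.card_pos.mp (by omega)
        obtain ⟨m, hm, hmmax⟩ := Finset.exists_max_image (S.erase j) f hne'
        have ihm := (ih (S.erase j) hS'
            (fun k hk => ha k (Finset.mem_of_mem_erase hk))
            (fun i hi k hk hik => hsep i (Finset.mem_of_mem_erase hi) k
              (Finset.mem_of_mem_erase hk) hik)).2 m hm hmmax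
        have hmj : m ≠ j := (Finset.mem_erase.mp hm).1
        have hle : f m ≤ f j := hmax m (Finset.mem_of_mem_erase hm)
        have hsep' : δ ≤ f j - f m := by
          have h := hsep j hj m (Finset.mem_of_mem_erase hm) (Ne.symm hmj)
          rwa [abs_of_nonneg (by linarith)] at h
        push_cast at ihm ⊢
        linarith
    refine ⟨?_, part2⟩
    have hSne : S.Nonempty := Finset.card_pos.mp (by omega)
    obtain ⟨j, hj, hjmax⟩ := Finset.exists_max_image S f hSne
    have hS' : (S.erase j).card = n := by
      simp [Finset.card_erase_of_mem hj, hS]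
    have ih1 := (ih (S.erase j) hS'
        (fun k hk => ha k (Finset.mem_of_mem_erase hk))
        (fun i hi k hk hik => hsep i (Finset.mem_of_mem_erase hi) k
          (Finset.mem_of_mem_erase hk) hik)).1
    have h2 := part2 j hj hjmax
    rw [← Finset.mul_prod_erase S _ hj]
    have hnn : (0:ℝ) ≤ δ ^ n * n.factorial := by positivity
    calc (δ:ℝ) ^ (n+1) * (n+1).factorial
        = (δ * ((n : ℕ) + 1 : ℕ)) * (δ ^ n * n.factorial) := by
          push_cast [Nat.factorial_succ]; ring
      _ ≤ (f j - a) * ∏ k ∈ S.erase j, (f k - a) :=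
          mul_le_mul h2 ih1 hnn (by linarith [ha j hj, hδ])

/-- Lower bound on the nodal product of a separated family. -/
private lemma denom_lb {d : ℕ} (δ : ℝ) (hδ : 0 < δ) (x : Fin (d+1) → ℝ)
    (hsep : ∀ i j, i ≠ j → δ ≤ |x i - x j|) (i : Fin (d+1)) :
    δ ^ d * ((d.factorial : ℝ) / 2 ^ d) ≤ ∏ j ∈ Finset.univ.erase i, |x i - x j| := by
  classical
  set T := (Finset.univ : Finset (Fin (d+1))).erase i with hT
  have hTcard : T.card = d := by simp [hT]
  have hmemne : ∀ j ∈ T, j ≠ i := fun j hj => Finset.ne_of_mem_erase hj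
  have hne : ∀ j ∈ T, x j ≠ x i := by
    intro j hj h
    have h2 := hsep i j (Ne.symm (hmemne j hj))
    rw [h, sub_self, abs_zero] at h2
    linarith
  set L := T.filter (fun j => x j < x i) with hL
  set R := T.filter (fun j => ¬ x j < x i) with hR
  have hcard : L.card + R.card = d := by
    rw [hL, hR, Finset.card_filter_add_card_filter_not, hTcard]
  have hprodL : δ ^ L.card * (L.card.factorial : ℝ) ≤ ∏ j ∈ L, (x i - x j) := by
    have h := (sep_prod_aux (fun j => -x j) δ (-x i) hδ L.card L rfl
      (by
        intro j hj
        have hjT : j ∈ T := Finset.mem_of_mem_filter j hj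
        have hlt : x j < x i := (Finset.mem_filter.mp hj).2
        have h := hsep i j (Ne.symm (hmemne j hjT))
        rw [abs_of_nonneg (by linarith)] at h
        show δ ≤ -x j - -x i
        linarith)
      (by
        intro a _ b _ hab
        have h := hsep a b hab
        show δ ≤ |-x a - -x b|
        rw [show -x a - -x b = -(x a - x b) by ring, abs_neg]
        exact h)).1
    calc δ ^ L.card * (L.card.factorial : ℝ) ≤ ∏ j ∈ L, (-x j - -x i) := h
      _ = ∏ j ∈ L, (x i - x j) := by apply Finset.prod_congr rfl; intro j _; ring
  have hprodR : δ ^ R.card * (R.card.factorial : ℝ) ≤ ∏ j ∈ R, (x j - x i) := by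
    exact (sep_prod_aux x δ (x i) hδ R.card R rfl
      (by
        intro j hj
        have hjT : j ∈ T := Finset.mem_of_mem_filter j hj
        have hgt : x i < x j :=
          lt_of_le_of_ne (not_lt.mp (Finset.mem_filter.mp hj).2) (Ne.symm (hne j hjT))
        have h := hsep i j (Ne.symm (hmemne j hjT))
        rw [abs_of_nonpos (by linarith)] at h
        linarith)
      (fun a _ b _ hab => hsep a b hab)).1
  -- combine
  have hsplit : ∏ j ∈ T, |x i - x j| = (∏ j ∈ L, (x i - x j)) * ∏ j ∈ R, (x j - x i) := by
    rw [← Finset.prod_filter_mul_prod_filter_not T (fun j => x j < x i) (fun j => |x i - x j|)]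
    congr 1
    · apply Finset.prod_congr rfl
      intro j hj
      have hlt : x j < x i := (Finset.mem_filter.mp hj).2
      rw [abs_of_nonneg (by linarith)]
    · apply Finset.prod_congr rfl
      intro j hj
      have hjT : j ∈ T := Finset.mem_of_mem_filter j hj
      have hgt : x i < x j :=
        lt_of_le_of_ne (not_lt.mp (Finset.mem_filter.mp hj).2) (Ne.symm (hne j hjT))
      rw [abs_of_nonpos (by linarith)]
      ring
  have hfactle : (d.factorial : ℝ) / 2 ^ d ≤ (L.card.factorial : ℝ) * R.card.factorial := by
    have hnat : d.factorial ≤ 2 ^ d * (L.card.factorial * R.card.factorial) := by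
      have hch : d.choose L.card * L.card.factorial * R.card.factorial = d.factorial := by
        have : R.card = d - L.card := by omega
        rw [this]
        exact Nat.choose_mul_factorial_mul_factorial (by omega)
      have hle : d.choose L.card ≤ 2 ^ d := by
        rw [← Nat.sum_range_choose d]
        exact Finset.single_le_sum (fun m _ => Nat.zero_le _)
          (Finset.mem_range.mpr (by omega))
      calc d.factorial = d.choose L.card * L.card.factorial * R.card.factorial := hch.symm
        _ ≤ 2 ^ d * L.card.factorial * R.card.factorial :=
            Nat.mul_le_mul_right _ (Nat.mul_le_mul_right _ hle)
        _ = 2 ^ d * (L.card.factorial * R.card.factorial) := by ring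
    rw [div_le_iff₀ (by positivity)]
    calc (d.factorial : ℝ) ≤ (2 ^ d * (L.card.factorial * R.card.factorial) : ℕ) := by
          exact_mod_cast hnat
      _ = (L.card.factorial : ℝ) * R.card.factorial * 2 ^ d := by push_cast; ring
  calc δ ^ d * ((d.factorial : ℝ) / 2 ^ d)
      ≤ δ ^ d * ((L.card.factorial : ℝ) * R.card.factorial) :=
        mul_le_mul_of_nonneg_left hfactle (by positivity)
    _ = (δ ^ L.card * (L.card.factorial : ℝ)) * (δ ^ R.card * (R.card.factorial : ℝ)) := by
        have hpow : δ ^ d = δ ^ L.card * δ ^ R.card := by rw [← pow_add, hcard]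
        rw [hpow]; ring
    _ ≤ (∏ j ∈ L, (x i - x j)) * ∏ j ∈ R, (x j - x i) := by
        apply mul_le_mul hprodL hprodR (by positivity) ?_
        exact le_trans (by positivity) hprodL
    _ = ∏ j ∈ T, |x i - x j| := hsplit.symm

private lemma pow_le_exp_fact : ∀ d : ℕ, 1 ≤ d →
    (d : ℝ) ^ d * Real.exp 1 ≤ Real.exp 1 ^ d * d.factorial := by
  intro d hd
  induction d, hd using Nat.le_induction with
  | base => simp
  | succ d hd ih =>
    have hd0 : (0:ℝ) < d := by exact_mod_cast hd
    have key : ((d:ℝ) + 1) ^ d ≤ Real.exp 1 * (d:ℝ) ^ d := by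
      have h1 : (1 + 1/(d:ℝ)) ^ d ≤ Real.exp 1 := by
        have h2 := Real.add_one_le_exp (1/(d:ℝ))
        calc (1 + 1/(d:ℝ)) ^ d ≤ Real.exp (1/(d:ℝ)) ^ d :=
              pow_le_pow_left₀ (by positivity) (by linarith) d
          _ = Real.exp ((d:ℕ) * (1/(d:ℝ))) := (Real.exp_nat_mul _ d).symm
          _ = Real.exp 1 := by rw [mul_one_div_cancel (ne_of_gt hd0)]
      calc ((d:ℝ)+1) ^ d = ((1 + 1/(d:ℝ)) * d) ^ d := by
            field_simp
        _ = (1 + 1/(d:ℝ)) ^ d * (d:ℝ) ^ d := mul_pow _ _ d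
        _ ≤ Real.exp 1 * (d:ℝ) ^ d := mul_le_mul_of_nonneg_right h1 (by positivity)
    have hE : (0:ℝ) < Real.exp 1 := Real.exp_pos 1
    have hdfac : (0:ℝ) < d.factorial := by exact_mod_cast d.factorial_pos
    push_cast [Nat.factorial_succ, pow_succ]
    push_cast at ih
    have k2 := mul_le_mul_of_nonneg_right key
      (by positivity : (0:ℝ) ≤ ((d:ℝ) + 1) * Real.exp 1)
    have k3 := mul_le_mul_of_nonneg_right ih
      (by positivity : (0:ℝ) ≤ ((d:ℝ) + 1) * Real.exp 1)
    nlinarith [k2, k3]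

private lemma two_pow_le_exp : ∀ d : ℕ, 1 ≤ d →
    ((d:ℝ) + 1) * 2 ^ d ≤ Real.exp 1 ^ (d + 1) := by
  have he : (2.7:ℝ) ≤ Real.exp 1 := le_of_lt (lt_trans (by norm_num) Real.exp_one_gt_d9)
  have he0 : (0:ℝ) < Real.exp 1 := Real.exp_pos 1
  have key : ∀ d : ℕ, 2 ≤ d → ((d:ℝ) + 1) * 2 ^ d ≤ Real.exp 1 ^ (d + 1) := by
    intro d hd
    induction d, hd using Nat.le_induction with
    | base =>
      have h3 : (2.7:ℝ) ^ 3 ≤ Real.exp 1 ^ 3 := pow_le_pow_left₀ (by norm_num) he 3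
      push_cast
      norm_num at h3 ⊢
      have hconv : Real.exp 1 ^ 3 = Real.exp 3 := by
        rw [← Real.exp_nat_mul]; norm_num
      nlinarith [h3, hconv]
    | succ d hd ih =>
      have hd1 : (2:ℝ) ≤ d := by exact_mod_cast hd
      push_cast at ih ⊢
      have step : ((d:ℝ) + 1 + 1) * 2 ≤ ((d:ℝ) + 1) * Real.exp 1 := by nlinarith
      calc ((d:ℝ) + 1 + 1) * 2 ^ (d+1) = (((d:ℝ) + 1 + 1) * 2) * 2 ^ d := by ring
        _ ≤ (((d:ℝ) + 1) * Real.exp 1) * 2 ^ d :=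
            mul_le_mul_of_nonneg_right step (by positivity)
        _ = (((d:ℝ) + 1) * 2 ^ d) * Real.exp 1 := by ring
        _ ≤ Real.exp 1 ^ (d + 1) * Real.exp 1 := mul_le_mul_of_nonneg_right ih (le_of_lt he0)
        _ = Real.exp 1 ^ (d + 1 + 1) := (pow_succ _ _).symm
  intro d hd
  rcases eq_or_lt_of_le hd with h | h
  · rw [← h]
    have h3 : (2.7:ℝ) ^ 2 ≤ Real.exp 1 ^ 2 := pow_le_pow_left₀ (by norm_num) he 2
    push_cast
    norm_num at h3 ⊢
    have hconv : Real.exp 1 ^ 2 = Real.exp 2 := by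
      rw [← Real.exp_nat_mul]; norm_num
    nlinarith [h3, hconv]
  · exact key d h

/-- Discrete Remez inequality on `[-ℓ,ℓ]`: a polynomial of degree at most `d` is controlled on
all of `[-ℓ,ℓ]` by its values on a `δ`-separated set of `d+1` points. -/
theorem discrete_remez_interval
    (d : ℕ) (hd : 1 ≤ d) (ℓ δ : ℝ) (hℓ : 0 < ℓ) (hδ : 0 < δ)
    (x : Fin (d + 1) → ℝ) (hx : ∀ j, x j ∈ Set.Icc (-ℓ) ℓ)
    (hsep : ∀ i j, i ≠ j → δ ≤ |x i - x j|)
    (p : Polynomial ℝ) (hp : p.natDegree ≤ d) :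
    ∀ y ∈ Set.Icc (-ℓ) ℓ,
      |p.eval y| ≤ (2 * Real.exp 2 * (δ * d)⁻¹ * ℓ) ^ d * ⨆ j, |p.eval (x j)| := by
  classical
  intro y hy
  set M := ⨆ j, |p.eval (x j)| with hM
  have hbdd : BddAbove (Set.range fun j => |p.eval (x j)|) :=
    Set.Finite.bddAbove (Set.finite_range _)
  have hMle : ∀ j, |p.eval (x j)| ≤ M := fun j => le_ciSup hbdd j
  have hM0 : (0:ℝ) ≤ M := le_trans (abs_nonneg _) (hMle 0)
  have hinj : Set.InjOn x ↑(Finset.univ : Finset (Fin (d+1))) := by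
    intro a _ b _ hab
    by_contra h
    have h2 := hsep a b h
    rw [hab, sub_self, abs_zero] at h2
    linarith
  have hdeg : p.degree < ((Finset.univ : Finset (Fin (d+1))).card : WithBot ℕ) := by
    refine lt_of_le_of_lt p.degree_le_natDegree ?_
    rw [Finset.card_univ, Fintype.card_fin]
    exact_mod_cast Nat.lt_succ_of_le hp
  have hrep := Lagrange.eq_interpolate hinj hdeg
  have heval : p.eval y = ∑ i, p.eval (x i) * (Lagrange.basis Finset.univ x i).eval y := by
    conv_lhs => rw [hrep]
    rw [Lagrange.interpolate_apply, Polynomial.eval_finset_sum]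
    simp [Polynomial.eval_mul]
  set K := δ ^ d * ((d.factorial : ℝ) / 2 ^ d) with hK
  have hKpos : (0:ℝ) < K := by
    have : (0:ℝ) < (d.factorial : ℝ) := by exact_mod_cast d.factorial_pos
    positivity
  have hbasis : ∀ i : Fin (d+1),
      |(Lagrange.basis Finset.univ x i).eval y| ≤ (2*ℓ) ^ d * K⁻¹ := by
    intro i
    rw [Lagrange.basis, Polynomial.eval_prod, Finset.abs_prod]
    have hcong : ∀ j ∈ Finset.univ.erase i,
        |(Lagrange.basisDivisor (x i) (x j)).eval y| = |x i - x j|⁻¹ * |y - x j| := by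
      intro j _
      simp [Lagrange.basisDivisor, abs_mul, abs_inv]
    rw [Finset.prod_congr rfl hcong, Finset.prod_mul_distrib, Finset.prod_inv_distrib]
    have hc : (Finset.univ.erase i).card = d := by simp
    have hnum : ∏ j ∈ Finset.univ.erase i, |y - x j| ≤ (2*ℓ) ^ d := by
      calc ∏ j ∈ Finset.univ.erase i, |y - x j|
          ≤ ∏ _j ∈ Finset.univ.erase i, (2*ℓ) := by
            apply Finset.prod_le_prod (fun j _ => abs_nonneg _)
            intro j _
            have h1 := (hx j).1; have h2 := (hx j).2
            have h3 := hy.1; have h4 := hy.2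
            rw [abs_le]
            constructor <;> linarith
        _ = (2*ℓ) ^ d := by rw [Finset.prod_const, hc]
    have hden : (∏ j ∈ Finset.univ.erase i, |x i - x j|)⁻¹ ≤ K⁻¹ :=
      inv_anti₀ hKpos (denom_lb δ hδ x hsep i)
    calc (∏ j ∈ Finset.univ.erase i, |x i - x j|)⁻¹ * ∏ j ∈ Finset.univ.erase i, |y - x j|
        ≤ K⁻¹ * (2*ℓ) ^ d :=
          mul_le_mul hden hnum (Finset.prod_nonneg fun j _ => abs_nonneg _)
            (le_of_lt (inv_pos.mpr hKpos))
      _ = (2*ℓ) ^ d * K⁻¹ := mul_comm _ _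
  have hsum : |p.eval y| ≤ ((d:ℝ) + 1) * ((2*ℓ) ^ d * K⁻¹) * M := by
    rw [heval]
    calc |∑ i, p.eval (x i) * (Lagrange.basis Finset.univ x i).eval y|
        ≤ ∑ i, |p.eval (x i) * (Lagrange.basis Finset.univ x i).eval y| :=
          Finset.abs_sum_le_sum_abs _ _
      _ ≤ ∑ _i : Fin (d+1), M * ((2*ℓ) ^ d * K⁻¹) := by
          apply Finset.sum_le_sum
          intro i _
          rw [abs_mul]
          exact mul_le_mul (hMle i) (hbasis i) (abs_nonneg _) hM0
      _ = ((d:ℝ) + 1) * ((2*ℓ) ^ d * K⁻¹) * M := by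
          rw [Finset.sum_const, Finset.card_univ, Fintype.card_fin]
          push_cast [nsmul_eq_mul]
          ring
  have hd0 : (0:ℝ) < d := by exact_mod_cast hd
  have hfac : (0:ℝ) < (d.factorial : ℝ) := by exact_mod_cast d.factorial_pos
  have hexp2 : Real.exp 2 = Real.exp 1 ^ 2 := by
    rw [← Real.exp_nat_mul]; norm_num
  have key : ((d:ℝ) + 1) * 2 ^ d * (d:ℝ) ^ d ≤ Real.exp 1 ^ (2*d) * d.factorial := by
    have h1 := pow_le_exp_fact d hd
    have h2 := two_pow_le_exp d hd
    have hE : (0:ℝ) < Real.exp 1 := Real.exp_pos 1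
    have h3 : (((d:ℝ) + 1) * 2 ^ d) * ((d:ℝ) ^ d * Real.exp 1)
        ≤ Real.exp 1 ^ (d+1) * (Real.exp 1 ^ d * d.factorial) :=
      mul_le_mul h2 h1 (by positivity) (by positivity)
    have h4 : Real.exp 1 ^ (d+1) * (Real.exp 1 ^ d * d.factorial)
        = (Real.exp 1 ^ (2*d) * d.factorial) * Real.exp 1 := by
      rw [two_mul, pow_add, pow_succ]; ring
    rw [h4] at h3
    have h5 : (((d:ℝ) + 1) * 2 ^ d) * ((d:ℝ) ^ d * Real.exp 1)
        = (((d:ℝ) + 1) * 2 ^ d * (d:ℝ) ^ d) * Real.exp 1 := by ring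
    rw [h5] at h3
    exact le_of_mul_le_mul_right h3 hE
  have hcoef : ((d:ℝ) + 1) * ((2*ℓ) ^ d * K⁻¹) ≤ (2 * Real.exp 2 * (δ * d)⁻¹ * ℓ) ^ d := by
    have hδ' : δ ≠ 0 := ne_of_gt hδ
    have hd' : (d:ℝ) ≠ 0 := ne_of_gt hd0
    have hf' : (d.factorial : ℝ) ≠ 0 := ne_of_gt hfac
    calc ((d:ℝ) + 1) * ((2*ℓ) ^ d * K⁻¹)
        = (((d:ℝ) + 1) * 2 ^ d * (d:ℝ) ^ d)
            * ((2*ℓ) ^ d / (δ ^ d * (d:ℝ) ^ d * d.factorial)) := by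
          rw [hK]; field_simp
      _ ≤ (Real.exp 1 ^ (2*d) * d.factorial)
            * ((2*ℓ) ^ d / (δ ^ d * (d:ℝ) ^ d * d.factorial)) := by
          apply mul_le_mul_of_nonneg_right key
          positivity
      _ = (2*ℓ) ^ d * Real.exp 1 ^ (2*d) / (δ ^ d * (d:ℝ) ^ d) := by
          field_simp
      _ = (2 * Real.exp 2 * (δ * d)⁻¹ * ℓ) ^ d := by
          rw [hexp2,
            show 2 * Real.exp 1 ^ 2 * (δ * (d:ℝ))⁻¹ * ℓ
              = 2 * ℓ * Real.exp 1 ^ 2 / (δ * (d:ℝ)) from by ring,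
            div_pow, mul_pow, mul_pow, ← pow_mul]
          ring
  calc |p.eval y| ≤ ((d:ℝ) + 1) * ((2*ℓ) ^ d * K⁻¹) * M := hsum
    _ ≤ (2 * Real.exp 2 * (δ * d)⁻¹ * ℓ) ^ d * M := mul_le_mul_of_nonneg_right hcoef hM0
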